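/- Let u : ℝ × ℝ → ℝ be smooth, and suppose that for each s the function x ↦ u(x,s) satisfies u_xxxx + σ u_xx + V'(u) = 0. Define the Lagrangian density L = u_x u_xxx + (1/2) u_xx² + (1/2) σ u_x² − V(u) and the action density A = u_xxx u_s + u_x u_xxs + σ u_x u_s. Then ∂L/∂s = ∂A/∂x. -/

import Mathlib

open Real

/-- Action conservation law `∂L/∂s = ∂A/∂x` for an ensemble of solutions of
`u_xxxx + σ u_xx + V'(u) = 0`. -/
theorem action_conservation_law
    (σ : ℝ) (V Vp : ℝ → ℝ)
    (u ux uxx uxxx uxxxx us uxs uxxs uxxxs : ℝ → ℝ → ℝ)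
    (hV : ∀ y, HasDerivAt V (Vp y) y)
    (hx : ∀ x s, HasDerivAt (fun x' => u x' s) (ux x s) x)
    (hxx : ∀ x s, HasDerivAt (fun x' => ux x' s) (uxx x s) x)
    (hxxx : ∀ x s, HasDerivAt (fun x' => uxx x' s) (uxxx x s) x)
    (hxxxx : ∀ x s, HasDerivAt (fun x' => uxxx x' s) (uxxxx x s) x)
    (hs : ∀ x s, HasDerivAt (fun s' => u x s') (us x s) s)
    (hxs : ∀ x s, HasDerivAt (fun s' => ux x s') (uxs x s) s)
    (hxxs : ∀ x s, HasDerivAt (fun s' => uxx x s') (uxxs x s) s)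
    (hxxxs : ∀ x s, HasDerivAt (fun s' => uxxx x s') (uxxxs x s) s)
    (hsx : ∀ x s, HasDerivAt (fun x' => us x' s) (uxs x s) x)
    (hxxsx : ∀ x s, HasDerivAt (fun x' => uxxs x' s) (uxxxs x s) x)
    (hODE : ∀ x s, uxxxx x s + σ * uxx x s + Vp (u x s) = 0) :
    ∀ x s : ℝ,
      deriv (fun s' => ux x s' * uxxx x s' + (1/2) * (uxx x s')^2
          + (1/2) * σ * (ux x s')^2 - V (u x s')) s
        = deriv (fun x' => uxxx x' s * us x' s + ux x' s * uxxs x' s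
          + σ * ux x' s * us x' s) x := by
  intro x s
  have hL : HasDerivAt (fun s' => ux x s' * uxxx x s' + (1/2) * (uxx x s')^2
      + (1/2) * σ * (ux x s')^2 - V (u x s'))
      (uxs x s * uxxx x s + ux x s * uxxxs x s
        + (1/2) * (2 * uxx x s * uxxs x s)
        + (1/2) * σ * (2 * ux x s * uxs x s) - Vp (u x s) * us x s) s := by
    have := ((((hxs x s).mul (hxxxs x s)).add
      (((hxxs x s).pow 2).const_mul (1/2))).add
      (((hxs x s).pow 2).const_mul ((1/2) * σ))).sub
      ((hV (u x s)).comp s (hs x s))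
    refine this.congr_deriv ?_
    norm_num
  have hR : HasDerivAt (fun x' => uxxx x' s * us x' s + ux x' s * uxxs x' s
      + σ * ux x' s * us x' s)
      (uxxxx x s * us x s + uxxx x s * uxs x s
        + (uxx x s * uxxs x s + ux x s * uxxxs x s)
        + (σ * uxx x s * us x s + σ * ux x s * uxs x s)) x := by
    have h3 : HasDerivAt (fun x' => σ * ux x' s * us x' s)
        (σ * uxx x s * us x s + σ * ux x s * uxs x s) x := by
      have := (((hxx x s).const_mul σ).mul (hsx x s))
      exact this
    exact ((((hxxxx x s).mul (hsx x s)).add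
      ((hxx x s).mul (hxxsx x s))).add h3)
  rw [hL.deriv, hR.deriv]
  linear_combination (-(us x s)) * hODE x s
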